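/- Let a_1 < a_2 < a_3 be positive reals and let Σ = {x ∈ ℝ³ : x_1²/a_1² + x_2²/a_2² + x_3²/a_3² = 1}. Then a point p = (x_1, x_2, x_3) ∈ Σ is umbilic if and only if x_2 = 0, x_1 = ± a_1 √((a_2² − a_1²)/(a_3² − a_1²)) and x_3 = ± a_3 √((a_3² − a_2²)/(a_3² − a_1²)); in particular Σ has exactly four umbilic points (all four sign combinations). -/

import Mathlib

set_option maxHeartbeats 1000000

open Finset

/-- A point `x` on the ellipsoid `∑ xᵢ²/aᵢ² = 1` with semi-axes `a` is *umbilic* if the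
second fundamental form at `x` is proportional to the induced metric, i.e. there is
`λ ∈ ℝ` such that every tangent vector `u` (i.e. `∑ aᵢ⁻² xᵢ uᵢ = 0`) satisfies
`∑ aᵢ⁻² uᵢ² = λ ∑ uᵢ²`. -/
def IsUmbilic {n : ℕ} (a x : Fin n → ℝ) : Prop :=
  ∃ lam : ℝ, ∀ u : Fin n → ℝ,
    (∑ i, x i * u i / a i ^ 2 = 0) → ∑ i, u i ^ 2 / a i ^ 2 = lam * ∑ i, u i ^ 2

lemma key (a₁ a₂ a₃ x₁ x₂ x₃ : ℝ) (h₁ : 0 < a₁) (h₁₂ : a₁ < a₂) (h₂₃ : a₂ < a₃)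
    (hell : x₁ ^ 2 / a₁ ^ 2 + x₂ ^ 2 / a₂ ^ 2 + x₃ ^ 2 / a₃ ^ 2 = 1) :
    IsUmbilic ![a₁, a₂, a₃] ![x₁, x₂, x₃] ↔
      x₂ = 0 ∧ x₁ ^ 2 = a₁ ^ 2 * (a₂ ^ 2 - a₁ ^ 2) / (a₃ ^ 2 - a₁ ^ 2) ∧
        x₃ ^ 2 = a₃ ^ 2 * (a₃ ^ 2 - a₂ ^ 2) / (a₃ ^ 2 - a₁ ^ 2) := by
  have hA : (0:ℝ) < a₁ ^ 2 := by positivity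
  have h2 : (0:ℝ) < a₂ := lt_trans h₁ h₁₂
  have h3 : (0:ℝ) < a₃ := lt_trans h2 h₂₃
  have hB : (0:ℝ) < a₂ ^ 2 := by positivity
  have hC : (0:ℝ) < a₃ ^ 2 := by positivity
  have hAB : a₁ ^ 2 < a₂ ^ 2 := by nlinarith
  have hBC : a₂ ^ 2 < a₃ ^ 2 := by nlinarith
  have hAC : a₁ ^ 2 < a₃ ^ 2 := lt_trans hAB hBC
  have ha1 : a₁ ≠ 0 := ne_of_gt h₁
  have ha2 : a₂ ≠ 0 := ne_of_gt h2
  have ha3 : a₃ ≠ 0 := ne_of_gt h3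
  have hBne : a₂ ^ 2 ≠ 0 := ne_of_gt hB
  have hCne : a₃ ^ 2 ≠ 0 := ne_of_gt hC
  have hCAne : a₃ ^ 2 - a₁ ^ 2 ≠ 0 := by intro h; linarith [hAC]
  constructor
  · rintro ⟨lam, hu⟩
    have hU : ∀ u₁ u₂ u₃ : ℝ, x₁ * u₁ / a₁ ^ 2 + x₂ * u₂ / a₂ ^ 2 + x₃ * u₃ / a₃ ^ 2 = 0 →
        u₁ ^ 2 / a₁ ^ 2 + u₂ ^ 2 / a₂ ^ 2 + u₃ ^ 2 / a₃ ^ 2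
          = lam * (u₁ ^ 2 + u₂ ^ 2 + u₃ ^ 2) := by
      intro u₁ u₂ u₃ h
      have := hu ![u₁, u₂, u₃] (by simpa [Fin.sum_univ_three] using h)
      simpa [Fin.sum_univ_three] using this
    -- step 1: x₂ = 0
    have hx2 : x₂ = 0 := by
      by_contra hx2
      have hx2sq : 0 < x₂ ^ 2 := by positivity
      by_cases hx1 : x₁ = 0
      · have hE1 := hU 1 0 0 (by simp [hx1])
        have hlam : lam = (a₁ ^ 2)⁻¹ := by
          norm_num at hE1; field_simp at hE1 ⊢; linarith
        have hE2 := hU 0 (x₃ * a₂ ^ 2) (-(x₂ * a₃ ^ 2)) (by field_simp; ring)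
        rw [hlam] at hE2
        field_simp at hE2
        nlinarith [hE2, mul_nonneg (by positivity : (0:ℝ) ≤ x₃ ^ 2 * a₂ ^ 2)
            (by linarith : (0:ℝ) ≤ a₂ ^ 2 - a₁ ^ 2),
          mul_pos (by positivity : (0:ℝ) < x₂ ^ 2 * a₃ ^ 2)
            (by linarith : (0:ℝ) < a₃ ^ 2 - a₁ ^ 2)]
      · by_cases hx3 : x₃ = 0
        · have hE1 := hU 0 0 1 (by simp [hx3])
          have hlam : lam = (a₃ ^ 2)⁻¹ := by
            norm_num at hE1; field_simp at hE1 ⊢; linarith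
          have hE2 := hU (x₂ * a₁ ^ 2) (-(x₁ * a₂ ^ 2)) 0 (by field_simp; ring)
          rw [hlam] at hE2
          field_simp at hE2
          nlinarith [hE2, mul_nonneg (by positivity : (0:ℝ) ≤ x₁ ^ 2 * a₂ ^ 2)
              (by linarith : (0:ℝ) ≤ a₃ ^ 2 - a₂ ^ 2),
            mul_pos (by positivity : (0:ℝ) < x₂ ^ 2 * a₁ ^ 2)
              (by linarith : (0:ℝ) < a₃ ^ 2 - a₁ ^ 2)]
        · have hEu := hU (x₂ * a₁ ^ 2) (-(x₁ * a₂ ^ 2)) 0 (by field_simp; ring)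
          have hEw := hU 0 (x₃ * a₂ ^ 2) (-(x₂ * a₃ ^ 2)) (by field_simp; ring)
          have hEuw := hU (x₂ * a₁ ^ 2) (-(x₁ * a₂ ^ 2) + x₃ * a₂ ^ 2) (-(x₂ * a₃ ^ 2))
            (by field_simp; ring)
          have hEv := hU (x₃ * a₁ ^ 2) 0 (-(x₁ * a₃ ^ 2)) (by field_simp; ring)
          have hEvw := hU (x₃ * a₁ ^ 2) (x₃ * a₂ ^ 2) (-(x₁ * a₃ ^ 2) + -(x₂ * a₃ ^ 2))
            (by field_simp; ring)
          field_simp at hEu hEw hEuw hEv hEvw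
          have e1 : lam * a₂ ^ 2 = 1 := by
            by_contra he
            have h0 : x₁ * x₃ * (1 - lam * a₂ ^ 2) * (2 * a₁ ^ 2 * a₂ ^ 4 * a₃ ^ 2) = 0 := by
              linear_combination a₁ ^ 2 * a₂ ^ 2 * hEu + a₂ ^ 2 * a₃ ^ 2 * hEw - a₁ ^ 2 * a₂ ^ 2 * a₃ ^ 2 * hEuw
            have hne : x₁ * x₃ * (1 - lam * a₂ ^ 2) * (2 * a₁ ^ 2 * a₂ ^ 4 * a₃ ^ 2) ≠ 0 := by
              apply mul_ne_zero (mul_ne_zero (mul_ne_zero hx1 hx3) _) (by positivity)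
              intro h; exact he (by linarith)
            exact hne h0
          have e2 : lam * a₃ ^ 2 = 1 := by
            by_contra he
            have h0 : x₁ * x₂ * (1 - lam * a₃ ^ 2) * (2 * a₁ ^ 2 * a₂ ^ 2 * a₃ ^ 4) = 0 := by
              linear_combination a₁ ^ 2 * a₂ ^ 2 * a₃ ^ 2 * hEvw - a₁ ^ 2 * a₃ ^ 2 * hEv - a₂ ^ 2 * a₃ ^ 2 * hEw
            have hne : x₁ * x₂ * (1 - lam * a₃ ^ 2) * (2 * a₁ ^ 2 * a₂ ^ 2 * a₃ ^ 4) ≠ 0 := by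
              apply mul_ne_zero (mul_ne_zero (mul_ne_zero hx1 hx2) _) (by positivity)
              intro h; exact he (by linarith)
            exact hne h0
          have hlp : 0 < lam := by nlinarith
          nlinarith
    have hE1 := hU 0 1 0 (by simp [hx2])
    have hlam : lam = (a₂ ^ 2)⁻¹ := by
      norm_num at hE1; field_simp at hE1 ⊢; linarith
    have hE2 := hU (x₃ * a₁ ^ 2) 0 (-(x₁ * a₃ ^ 2)) (by field_simp; ring)
    rw [hlam] at hE2
    rw [hx2] at hell
    norm_num at hell
    field_simp at hE2 hell
    refine ⟨hx2, ?_, ?_⟩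
    · rw [eq_div_iff hCAne]
      have h0 : x₁ ^ 2 * (a₃ ^ 2 - a₁ ^ 2) * (a₁ ^ 2 * a₃ ^ 4)
          = a₁ ^ 2 * (a₂ ^ 2 - a₁ ^ 2) * (a₁ ^ 2 * a₃ ^ 4) := by
        linear_combination (a₁ ^ 2 * a₃ ^ 2 * (a₂ ^ 2 - a₁ ^ 2)) * hell - a₁ ^ 2 * a₃ ^ 2 * hE2
      exact mul_right_cancel₀ (by positivity) h0
    · rw [eq_div_iff hCAne]
      have h0 : x₃ ^ 2 * (a₃ ^ 2 - a₁ ^ 2) * (a₁ ^ 4 * a₃ ^ 2)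
          = a₃ ^ 2 * (a₃ ^ 2 - a₂ ^ 2) * (a₁ ^ 4 * a₃ ^ 2) := by
        linear_combination (a₁ ^ 2 * a₃ ^ 2 * (a₃ ^ 2 - a₂ ^ 2)) * hell + a₁ ^ 2 * a₃ ^ 2 * hE2
      exact mul_right_cancel₀ (by positivity) h0
  · rintro ⟨hx2, hx1sq, hx3sq⟩
    refine ⟨(a₂ ^ 2)⁻¹, ?_⟩
    intro u hu
    simp only [Fin.sum_univ_three, Matrix.cons_val_zero, Matrix.cons_val_one, Matrix.head_cons,
      Matrix.cons_val_two, Matrix.tail_cons] at hu ⊢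
    rw [hx2] at hu
    norm_num at hu
    have h' : x₁ * u 0 * a₃ ^ 2 + x₃ * u 2 * a₁ ^ 2 = 0 := by
      field_simp at hu; linarith
    have hsq : (x₁ * u 0 * a₃ ^ 2) ^ 2 = (x₃ * u 2 * a₁ ^ 2) ^ 2 := by
      linear_combination (x₁ * u 0 * a₃ ^ 2 - x₃ * u 2 * a₁ ^ 2) * h'
    have hsq2 : x₁ ^ 2 * (u 0 ^ 2 * a₃ ^ 4) = x₃ ^ 2 * (u 2 ^ 2 * a₁ ^ 4) := by
      linear_combination hsq
    rw [hx1sq, hx3sq] at hsq2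
    have hkey : u 0 ^ 2 * a₃ ^ 2 * (a₂ ^ 2 - a₁ ^ 2) = u 2 ^ 2 * a₁ ^ 2 * (a₃ ^ 2 - a₂ ^ 2) := by
      rw [div_mul_eq_mul_div, div_mul_eq_mul_div, div_eq_div_iff hCAne hCAne] at hsq2
      have h0 : u 0 ^ 2 * a₃ ^ 2 * (a₂ ^ 2 - a₁ ^ 2) * (a₁ ^ 2 * a₃ ^ 2 * (a₃ ^ 2 - a₁ ^ 2))
          = u 2 ^ 2 * a₁ ^ 2 * (a₃ ^ 2 - a₂ ^ 2) * (a₁ ^ 2 * a₃ ^ 2 * (a₃ ^ 2 - a₁ ^ 2)) := by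
        linear_combination hsq2
      exact mul_right_cancel₀ (by
        exact mul_ne_zero (mul_ne_zero (by positivity) (by positivity)) hCAne) h0
    field_simp
    linear_combination hkey

/-- **Umbilic points of a generic three-dimensional ellipsoid.**
For `0 < a₁ < a₂ < a₃`, a point `(x₁, x₂, x₃)` on the ellipsoid
`x₁²/a₁² + x₂²/a₂² + x₃²/a₃² = 1` is umbilic iff `x₂ = 0`,
`x₁ = ± a₁ √((a₂² − a₁²)/(a₃² − a₁²))` and `x₃ = ± a₃ √((a₃² − a₂²)/(a₃² − a₁²))`;
in particular the ellipsoid has exactly four umbilic points. -/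
theorem stmt_1 (a₁ a₂ a₃ : ℝ) (h₁ : 0 < a₁) (h₁₂ : a₁ < a₂) (h₂₃ : a₂ < a₃) :
    (∀ x₁ x₂ x₃ : ℝ, x₁ ^ 2 / a₁ ^ 2 + x₂ ^ 2 / a₂ ^ 2 + x₃ ^ 2 / a₃ ^ 2 = 1 →
      (IsUmbilic ![a₁, a₂, a₃] ![x₁, x₂, x₃] ↔
        x₂ = 0 ∧
          (x₁ = a₁ * Real.sqrt ((a₂ ^ 2 - a₁ ^ 2) / (a₃ ^ 2 - a₁ ^ 2)) ∨
            x₁ = -(a₁ * Real.sqrt ((a₂ ^ 2 - a₁ ^ 2) / (a₃ ^ 2 - a₁ ^ 2)))) ∧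
          (x₃ = a₃ * Real.sqrt ((a₃ ^ 2 - a₂ ^ 2) / (a₃ ^ 2 - a₁ ^ 2)) ∨
            x₃ = -(a₃ * Real.sqrt ((a₃ ^ 2 - a₂ ^ 2) / (a₃ ^ 2 - a₁ ^ 2)))))) ∧
    {p : Fin 3 → ℝ |
        p 0 ^ 2 / a₁ ^ 2 + p 1 ^ 2 / a₂ ^ 2 + p 2 ^ 2 / a₃ ^ 2 = 1 ∧
        IsUmbilic ![a₁, a₂, a₃] p}.ncard = 4 := by
  have h2 : (0:ℝ) < a₂ := lt_trans h₁ h₁₂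
  have h3 : (0:ℝ) < a₃ := lt_trans h2 h₂₃
  have hAB : a₁ ^ 2 < a₂ ^ 2 := by nlinarith
  have hBC : a₂ ^ 2 < a₃ ^ 2 := by nlinarith
  have hAC : a₁ ^ 2 < a₃ ^ 2 := lt_trans hAB hBC
  set c₁ := a₁ * Real.sqrt ((a₂ ^ 2 - a₁ ^ 2) / (a₃ ^ 2 - a₁ ^ 2)) with hc₁def
  set c₃ := a₃ * Real.sqrt ((a₃ ^ 2 - a₂ ^ 2) / (a₃ ^ 2 - a₁ ^ 2)) with hc₃def
  have hc1pos : 0 < c₁ := by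
    apply mul_pos h₁ (Real.sqrt_pos.mpr (by apply div_pos <;> linarith))
  have hc3pos : 0 < c₃ := by
    apply mul_pos h3 (Real.sqrt_pos.mpr (by apply div_pos <;> linarith))
  have hc1sq : c₁ ^ 2 = a₁ ^ 2 * (a₂ ^ 2 - a₁ ^ 2) / (a₃ ^ 2 - a₁ ^ 2) := by
    rw [hc₁def, mul_pow, Real.sq_sqrt (by apply div_nonneg <;> linarith), mul_div_assoc]
  have hc3sq : c₃ ^ 2 = a₃ ^ 2 * (a₃ ^ 2 - a₂ ^ 2) / (a₃ ^ 2 - a₁ ^ 2) := by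
    rw [hc₃def, mul_pow, Real.sq_sqrt (by apply div_nonneg <;> linarith), mul_div_assoc]
  have hmain : ∀ x₁ x₂ x₃ : ℝ, x₁ ^ 2 / a₁ ^ 2 + x₂ ^ 2 / a₂ ^ 2 + x₃ ^ 2 / a₃ ^ 2 = 1 →
      (IsUmbilic ![a₁, a₂, a₃] ![x₁, x₂, x₃] ↔
        x₂ = 0 ∧ (x₁ = c₁ ∨ x₁ = -c₁) ∧ (x₃ = c₃ ∨ x₃ = -c₃)) := by
    intro x₁ x₂ x₃ hell
    rw [key a₁ a₂ a₃ x₁ x₂ x₃ h₁ h₁₂ h₂₃ hell, ← hc1sq, ← hc3sq,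
      sq_eq_sq_iff_eq_or_eq_neg, sq_eq_sq_iff_eq_or_eq_neg]
  refine ⟨hmain, ?_⟩
  have ha1 : a₁ ≠ 0 := ne_of_gt h₁
  have ha2 : a₂ ≠ 0 := ne_of_gt h2
  have ha3 : a₃ ≠ 0 := ne_of_gt h3
  have hCAne : a₃ ^ 2 - a₁ ^ 2 ≠ 0 := by intro h; linarith
  have hset : {p : Fin 3 → ℝ |
        p 0 ^ 2 / a₁ ^ 2 + p 1 ^ 2 / a₂ ^ 2 + p 2 ^ 2 / a₃ ^ 2 = 1 ∧
        IsUmbilic ![a₁, a₂, a₃] p} =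
      {![c₁, 0, c₃], ![c₁, 0, -c₃], ![-c₁, 0, c₃], ![-c₁, 0, -c₃]} := by
    ext p
    simp only [Set.mem_setOf_eq, Set.mem_insert_iff, Set.mem_singleton_iff]
    have hp : ![p 0, p 1, p 2] = p := by
      funext i; fin_cases i <;> rfl
    constructor
    · rintro ⟨he, hu⟩
      obtain ⟨hz, h1, h3⟩ := (hmain (p 0) (p 1) (p 2) he).mp (by rwa [hp])
      rcases h1 with h1 | h1 <;> rcases h3 with h3 | h3
      · exact Or.inl (by rw [← hp, h1, hz, h3])
      · exact Or.inr (Or.inl (by rw [← hp, h1, hz, h3]))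
      · exact Or.inr (Or.inr (Or.inl (by rw [← hp, h1, hz, h3])))
      · exact Or.inr (Or.inr (Or.inr (by rw [← hp, h1, hz, h3])))
    · have hellgen : ∀ x z : ℝ, x ^ 2 = c₁ ^ 2 → z ^ 2 = c₃ ^ 2 →
          x ^ 2 / a₁ ^ 2 + (0:ℝ) ^ 2 / a₂ ^ 2 + z ^ 2 / a₃ ^ 2 = 1 := by
        intro x z hx hz
        rw [hx, hz, hc1sq, hc3sq]
        field_simp
        ring
      have humb : ∀ x z : ℝ, (x = c₁ ∨ x = -c₁) → (z = c₃ ∨ z = -c₃) →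
          x ^ 2 / a₁ ^ 2 + (0:ℝ) ^ 2 / a₂ ^ 2 + z ^ 2 / a₃ ^ 2 = 1 ∧
            IsUmbilic ![a₁, a₂, a₃] ![x, 0, z] := by
        intro x z hx hz
        have hx2 : x ^ 2 = c₁ ^ 2 := by rcases hx with rfl | rfl; rfl; rw [neg_pow]; ring
        have hz2 : z ^ 2 = c₃ ^ 2 := by rcases hz with rfl | rfl; rfl; rw [neg_pow]; ring
        exact ⟨hellgen x z hx2 hz2,
          (hmain x 0 z (hellgen x z hx2 hz2)).mpr ⟨rfl, hx, hz⟩⟩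
      rintro (rfl | rfl | rfl | rfl) <;>
        simp only [Matrix.cons_val_zero, Matrix.cons_val_one, Matrix.head_cons,
          Matrix.cons_val_two, Matrix.tail_cons]
      · exact humb c₁ c₃ (Or.inl rfl) (Or.inl rfl)
      · exact humb c₁ (-c₃) (Or.inl rfl) (Or.inr rfl)
      · exact humb (-c₁) c₃ (Or.inr rfl) (Or.inl rfl)
      · exact humb (-c₁) (-c₃) (Or.inr rfl) (Or.inr rfl)
  rw [hset]
  have hne0 : c₁ ≠ -c₁ := by intro h; nlinarith
  have hne2 : c₃ ≠ -c₃ := by intro h; nlinarith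
  have d1 : (![c₁, 0, c₃] : Fin 3 → ℝ) ∉
      ({![c₁, 0, -c₃], ![-c₁, 0, c₃], ![-c₁, 0, -c₃]} : Set (Fin 3 → ℝ)) := by
    simp only [Set.mem_insert_iff, Set.mem_singleton_iff]
    push_neg
    refine ⟨fun h => hne2 ?_, fun h => hne0 ?_, fun h => hne0 ?_⟩
    · have := congrFun h 2; simpa using this
    · have := congrFun h 0; simpa using this
    · have := congrFun h 0; simpa using this
  have d2 : (![c₁, 0, -c₃] : Fin 3 → ℝ) ∉
      ({![-c₁, 0, c₃], ![-c₁, 0, -c₃]} : Set (Fin 3 → ℝ)) := by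
    simp only [Set.mem_insert_iff, Set.mem_singleton_iff]
    push_neg
    refine ⟨fun h => hne0 ?_, fun h => hne0 ?_⟩
    · have := congrFun h 0; simpa using this
    · have := congrFun h 0; simpa using this
  have d3 : (![-c₁, 0, c₃] : Fin 3 → ℝ) ∉ ({![-c₁, 0, -c₃]} : Set (Fin 3 → ℝ)) := by
    simp only [Set.mem_singleton_iff]
    intro h
    exact hne2 (by have := congrFun h 2; simpa using this)
  rw [Set.ncard_insert_of_notMem d1, Set.ncard_insert_of_notMem d2,
    Set.ncard_insert_of_notMem d3, Set.ncard_singleton]
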